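/- arXiv:2410.16126 — 4 statements merged into one kernel-verified Lean document; each statement's English description precedes it below -/
import Mathlib

section
/- For all natural numbers p and q, the following identity holds in the ring of Laurent polynomials ℤ[X, X⁻¹]: (Σ_{k=-p}^{p} X^k) · (Σ_{k=-q}^{q} X^k) = Σ_{k=|p-q|}^{p+q} (Σ_{j=-k}^{k} X^j). -/
open LaurentPolynomial Finset

noncomputable def Sphi (a b : ℤ) : LaurentPolynomial ℤ := ∑ k ∈ Finset.Ioc a b, T k

lemma Sphi_split {a b c : ℤ} (hab : a ≤ b) (hbc : b ≤ c) : Sphi a b + Sphi b c = Sphi a c := by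
  unfold Sphi
  rw [← Ioc_union_Ioc_eq_Ioc hab hbc, sum_union]
  rw [Finset.disjoint_left]
  intro x hx hx'
  simp only [Finset.mem_Ioc] at hx hx'
  omega

lemma T_mul_Sphi (a b c : ℤ) : (T a : LaurentPolynomial ℤ) * Sphi b c = Sphi (a + b) (a + c) := by
  unfold Sphi
  rw [Finset.mul_sum, ← map_add_left_Ioc b c a, Finset.sum_map]
  refine Finset.sum_congr rfl fun i _ => ?_
  rw [addLeftEmbedding_apply, T_add]

lemma Sphi_single (a : ℤ) : Sphi (a - 1) a = T a := by
  have : Finset.Ioc (a - 1) a = {a} := by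
    ext x; simp [Finset.mem_Ioc]; omega
  simp [Sphi, this]

lemma Icc_sum_eq_Sphi (n : ℤ) :
    (∑ k ∈ Finset.Icc (-n) n, (T k : LaurentPolynomial ℤ)) = Sphi (-n - 1) n := by
  unfold Sphi
  congr 1
  ext x; simp [Finset.mem_Icc, Finset.mem_Ioc]

lemma phi_main (q : ℕ) : ∀ p : ℕ, p ≤ q →
    Sphi (-(p:ℤ) - 1) p * Sphi (-(q:ℤ) - 1) q =
      ∑ k ∈ Finset.Icc (q - p) (p + q), Sphi (-(k:ℤ) - 1) k := by
  intro p
  induction p with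
  | zero =>
    intro _
    have h0 : Sphi (-(0:ℕ) - 1 : ℤ) ((0:ℕ) : ℤ) = T 0 := by
      rw [show (-((0:ℕ):ℤ) - 1) = (0:ℤ) - 1 by norm_num]; exact Sphi_single 0
    rw [h0, T_zero, one_mul]
    rw [Nat.sub_zero, zero_add, Finset.Icc_self, Finset.sum_singleton]
  | succ p ih =>
    intro h
    have hp : p ≤ q := Nat.le_of_succ_le h
    have hq1 : 1 ≤ q - p := by omega
    set a : ℤ := (p : ℤ) + 1 with ha
    have ha1 : a ≤ (q : ℤ) := by rw [ha]; exact_mod_cast h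
    have ha0 : 0 < a := by positivity
    -- split φ_{p+1} = T(-a) + φ_p + T a
    have hsplit : Sphi (-a - 1) a = T (-a) + Sphi (-(p:ℤ) - 1) (p:ℤ) + T a := by
      rw [← Sphi_single (-a), ← Sphi_single a]
      have h1 : Sphi (-a - 1) (-a) + Sphi (-a) (p:ℤ) = Sphi (-a - 1) (p:ℤ) :=
        Sphi_split (by omega) (by omega)
      have e1 : Sphi (-a) (p:ℤ) = Sphi (-(p:ℤ) - 1) (p:ℤ) := by rw [show (-a : ℤ) = -(p:ℤ) - 1 by omega]
      have e2 : Sphi (a - 1) a = Sphi ((p:ℤ)) a := by rw [show (a - 1 : ℤ) = (p:ℤ) by omega]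
      have h2 : Sphi (-a - 1) (p:ℤ) + Sphi ((p:ℤ)) a = Sphi (-a - 1) a :=
        Sphi_split (by omega) (by omega)
      rw [← h2, ← h1, e1, ← e2]
    have hcast : Sphi (-((p+1:ℕ):ℤ) - 1) ((p+1:ℕ):ℤ) = Sphi (-a - 1) a := by
      rw [ha]; push_cast; ring_nf
    rw [hcast, hsplit, add_mul, add_mul, ih hp, T_mul_Sphi, T_mul_Sphi]
    -- RHS: Icc (q-(p+1)) (p+1+q) = {q-p-1} ∪ Icc (q-p) (p+q) ∪ {p+q+1}
    have hrhs : (∑ k ∈ Finset.Icc (q - (p+1)) (p + 1 + q), Sphi (-(k:ℤ) - 1) k)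
        = Sphi (-((q - (p+1) : ℕ) : ℤ) - 1) ((q - (p+1) : ℕ) : ℤ)
          + (∑ k ∈ Finset.Icc (q - p) (p + q), Sphi (-(k:ℤ) - 1) k)
          + Sphi (-((p + q + 1 : ℕ) : ℤ) - 1) ((p + q + 1 : ℕ) : ℤ) := by
      have e1 : Finset.Icc (q - (p+1)) (p + 1 + q)
          = insert (q - (p+1)) (insert (p + q + 1) (Finset.Icc (q - p) (p + q))) := by
        ext x; simp [Finset.mem_Icc]; omega
      rw [e1, Finset.sum_insert, Finset.sum_insert]
      · ring
      · simp only [Finset.mem_Icc]; omega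
      · simp only [Finset.mem_insert, Finset.mem_Icc]; omega
    rw [hrhs]
    -- remaining: T(-a)*φq + φpφq + Ta*φq pieces
    have hb : ((q - (p+1) : ℕ) : ℤ) = (q : ℤ) - a := by push_cast [Nat.cast_sub h]; ring
    have hc : ((p + q + 1 : ℕ) : ℤ) = (q : ℤ) + a := by push_cast; ring
    rw [hb, hc]
    -- goal: S(-a + (-q-1)) (-a+q) + Σ + S(a + (-q-1)) (a+q) = S(-(q-a)-1)(q-a) + Σ + S(-(q+a)-1)(q+a)
    have key : Sphi (-a + (-(q:ℤ) - 1)) (-a + q) + Sphi (a + (-(q:ℤ) - 1)) (a + q)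
        = Sphi (-((q:ℤ) - a) - 1) ((q:ℤ) - a) + Sphi (-((q:ℤ) + a) - 1) ((q:ℤ) + a) := by
      have s1 : Sphi (-((q:ℤ)+a) - 1) ((q:ℤ) - a) + Sphi ((q:ℤ) - a) ((q:ℤ) + a)
          = Sphi (-((q:ℤ)+a) - 1) ((q:ℤ) + a) := Sphi_split (by omega) (by omega)
      have s2 : Sphi (a - (q:ℤ) - 1) ((q:ℤ) - a) + Sphi ((q:ℤ) - a) ((q:ℤ) + a)
          = Sphi (a - (q:ℤ) - 1) ((q:ℤ) + a) := Sphi_split (by omega) (by omega)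
      have e1 : (-a + (-(q:ℤ) - 1)) = -((q:ℤ)+a) - 1 := by ring
      have e2 : (-a + (q:ℤ)) = (q:ℤ) - a := by ring
      have e3 : (a + (-(q:ℤ) - 1)) = a - (q:ℤ) - 1 := by ring
      have e4 : (a + (q:ℤ)) = (q:ℤ) + a := by ring
      have e5 : (-((q:ℤ) - a) - 1) = a - (q:ℤ) - 1 := by ring
      rw [e1, e2, e3, e4, e5, ← s1, ← s2]
      abel
    linear_combination key

/-- For all natural numbers `p` and `q`, in `ℤ[X, X⁻¹]` one has
`(∑_{k=-p}^{p} X^k) * (∑_{k=-q}^{q} X^k) = ∑_{k=|p-q|}^{p+q} (∑_{j=-k}^{k} X^j)`,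
i.e. `φ_p * φ_q = ∑_{k=|p-q|}^{p+q} φ_k`. -/
theorem phi_mul_phi (p q : ℕ) :
    (∑ k ∈ Finset.Icc (-(p : ℤ)) (p : ℤ), (T k : LaurentPolynomial ℤ)) *
      (∑ k ∈ Finset.Icc (-(q : ℤ)) (q : ℤ), (T k : LaurentPolynomial ℤ)) =
    ∑ k ∈ Finset.Icc (((p : ℤ) - (q : ℤ)).natAbs) (p + q),
      ∑ j ∈ Finset.Icc (-(k : ℤ)) (k : ℤ), (T j : LaurentPolynomial ℤ) := by
  simp only [Icc_sum_eq_Sphi]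
  rcases le_total p q with h | h
  · have : ((p : ℤ) - q).natAbs = q - p := by omega
    rw [this]
    exact phi_main q p h
  · have : ((p : ℤ) - q).natAbs = p - q := by omega
    rw [this, mul_comm, add_comm p q]
    exact phi_main p q h
end

section
/- For all natural numbers p and q, the following identity holds in the ring of Laurent polynomials ℤ[X, X⁻¹]: (Σ_{k=-p}^{p+1} X^k) · (Σ_{k=-q}^{q+1} X^k) = X · Σ_{k=|p-q|}^{p+q+1} (Σ_{j=-k}^{k} X^j). -/
open LaurentPolynomial

private lemma Icc_int_insert (a b : ℤ) (h : a ≤ b + 1) :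
    Finset.Icc a (b + 1) = insert (b + 1) (Finset.Icc a b) := by
  ext x; simp only [Finset.mem_Icc, Finset.mem_insert]; omega

private lemma tel (a : ℤ) : ∀ n : ℕ,
    ((T 1 : LaurentPolynomial ℤ) - 1) * ∑ k ∈ Finset.Icc a (a - 1 + n), (T k : LaurentPolynomial ℤ)
      = T (a + n) - T a := by
  intro n
  induction n with
  | zero => simp [Finset.Icc_eq_empty_of_lt (by omega : a - 1 + (0:ℕ) < a)]
  | succ m ih =>
      have h1 : a - 1 + ((m : ℤ) + 1) = (a - 1 + m) + 1 := by ring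
      push_cast
      push_cast at ih
      rw [h1, Icc_int_insert a (a - 1 + m) (by omega),
        Finset.sum_insert (by simp), mul_add, ih]
      have : a - 1 + (m : ℤ) + 1 = a + m := by ring
      rw [this, sub_mul, one_mul, ← T_add]
      ring_nf

private lemma tel' (a b : ℤ) (h : a ≤ b + 1) :
    ((T 1 : LaurentPolynomial ℤ) - 1) * ∑ k ∈ Finset.Icc a b, (T k : LaurentPolynomial ℤ)
      = T (b + 1) - T a := by
  obtain ⟨n, hn⟩ := Int.le.dest h
  have hb : b = a - 1 + n := by omega
  rw [hb]
  have := tel a n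
  rw [this, show a - 1 + (n:ℤ) + 1 = a + n by ring]

private lemma telN (f : ℕ → LaurentPolynomial ℤ) (m : ℕ) : ∀ n : ℕ, m ≤ n →
    ∑ k ∈ Finset.Icc m n, (f (k + 1) - f k) = f (n + 1) - f m := by
  intro n
  induction n with
  | zero => intro h; interval_cases m; simp
  | succ j ih =>
      intro h
      rcases Nat.lt_or_ge m (j + 1) with h' | h'
      · rw [← Finset.Ico_add_one_right_eq_Icc, Finset.sum_Ico_succ_top (by omega), Finset.Ico_add_one_right_eq_Icc,
          ih (by omega)]
        ring
      · have : m = j + 1 := by omega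
        subst this
        simp

private lemma T_one_sub_one_ne_zero : ((T 1 : LaurentPolynomial ℤ) - 1) ≠ 0 := by
  rw [sub_ne_zero]
  intro h
  rw [← T_zero] at h
  have := AddMonoidAlgebra.single_left_injective (R := ℤ) one_ne_zero h
  norm_num at this

/-- For all natural numbers `p` and `q`, in `ℤ[X, X⁻¹]` one has
`(∑_{k=-p}^{p+1} X^k) * (∑_{k=-q}^{q+1} X^k) = X * ∑_{k=|p-q|}^{p+q+1} (∑_{j=-k}^{k} X^j)`,
i.e. `Ψ_p * Ψ_q = X * ∑_{k=|p-q|}^{p+q+1} φ_k`. -/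
theorem psi_mul_psi (p q : ℕ) :
    (∑ k ∈ Finset.Icc (-(p : ℤ)) ((p : ℤ) + 1), (T k : LaurentPolynomial ℤ)) *
      (∑ k ∈ Finset.Icc (-(q : ℤ)) ((q : ℤ) + 1), (T k : LaurentPolynomial ℤ)) =
    (T 1 : LaurentPolynomial ℤ) *
      ∑ k ∈ Finset.Icc (((p : ℤ) - (q : ℤ)).natAbs) (p + q + 1),
        ∑ j ∈ Finset.Icc (-(k : ℤ)) (k : ℤ), (T j : LaurentPolynomial ℤ) := by
  set u : LaurentPolynomial ℤ := T 1 - 1 with hu_def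
  have hu := T_one_sub_one_ne_zero
  set m : ℕ := ((p : ℤ) - (q : ℤ)).natAbs with hm_def
  set n : ℕ := p + q + 1 with hn_def
  set A : LaurentPolynomial ℤ :=
    ∑ k ∈ Finset.Icc (-(p : ℤ)) ((p : ℤ) + 1), (T k : LaurentPolynomial ℤ) with hA_def
  set B : LaurentPolynomial ℤ :=
    ∑ k ∈ Finset.Icc (-(q : ℤ)) ((q : ℤ) + 1), (T k : LaurentPolynomial ℤ) with hB_def
  set S : LaurentPolynomial ℤ :=
    ∑ k ∈ Finset.Icc m n, ∑ j ∈ Finset.Icc (-(k : ℤ)) (k : ℤ), (T j : LaurentPolynomial ℤ)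
    with hS_def
  apply mul_left_cancel₀ hu
  apply mul_left_cancel₀ hu
  have hA : u * A = T ((p : ℤ) + 1 + 1) - T (-(p : ℤ)) := by
    rw [hA_def, tel' _ _ (by omega)]
  have hB : u * B = T ((q : ℤ) + 1 + 1) - T (-(q : ℤ)) := by
    rw [hB_def, tel' _ _ (by omega)]
  have hmn : m ≤ n := by omega
  have hS1 : u * S = ∑ k ∈ Finset.Icc m n,
      ((T ((k : ℤ) + 1) : LaurentPolynomial ℤ) - T (-(k : ℤ))) := by
    rw [hS_def, Finset.mul_sum]
    refine Finset.sum_congr rfl fun k _ => ?_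
    rw [tel' _ _ (by omega)]
  have hS2 : u * (u * S) =
      (T ((n : ℤ) + 2) + T (1 - ((n : ℤ) + 1)))
        - (T ((m : ℤ) + 1) + T (1 - (m : ℤ))) := by
    rw [hS1, Finset.mul_sum]
    have key : ∀ k : ℕ, u * ((T ((k : ℤ) + 1) : LaurentPolynomial ℤ) - T (-(k : ℤ)))
        = (fun j : ℕ => (T ((j : ℤ) + 1) : LaurentPolynomial ℤ) + T (1 - (j : ℤ))) (k + 1)
          - (fun j : ℕ => (T ((j : ℤ) + 1) : LaurentPolynomial ℤ) + T (1 - (j : ℤ))) k := by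
      intro k
      simp only [hu_def]
      push_cast
      rw [show ((k : ℤ) + 1 + 1) = 1 + ((k : ℤ) + 1) by ring,
        show (1 : ℤ) - ((k : ℤ) + 1) = -(k : ℤ) by ring,
        show (1 : ℤ) - (k : ℤ) = 1 + -(k : ℤ) by ring,
        T_add 1 ((k : ℤ) + 1), T_add 1 (-(k : ℤ))]
      ring
    rw [Finset.sum_congr rfl fun k _ => key k,
      telN (fun j : ℕ => (T ((j : ℤ) + 1) : LaurentPolynomial ℤ) + T (1 - (j : ℤ))) m n hmn]
    push_cast
    ring_nf
  have hn' : (n : ℤ) = (p : ℤ) + q + 1 := by rw [hn_def]; push_cast; ring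
  calc u * (u * (A * B)) = (u * A) * (u * B) := by ring
    _ = (T ((p : ℤ) + 1 + 1) - T (-(p : ℤ))) * (T ((q : ℤ) + 1 + 1) - T (-(q : ℤ))) := by
        rw [hA, hB]
    _ = T 1 * ((T ((n : ℤ) + 2) + T (1 - ((n : ℤ) + 1)))
          - (T ((m : ℤ) + 1) + T (1 - (m : ℤ)))) := by
        simp only [mul_sub, sub_mul, mul_add, ← T_add]
        rw [hn']
        rcases le_total (q : ℤ) (p : ℤ) with h | h
        · have hm' : (m : ℤ) = (p : ℤ) - q := by rw [hm_def]; omega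
          rw [hm',
            show (1 : ℤ) + ((p:ℤ)+(q:ℤ)+1+2) = (p:ℤ)+1+1+((q:ℤ)+1+1) by ring,
            show (1 : ℤ) + (1-((p:ℤ)+(q:ℤ)+1+1)) = -(p:ℤ)+-(q:ℤ) by ring,
            show (1 : ℤ) + ((p:ℤ)-(q:ℤ)+1) = (p:ℤ)+1+1+-(q:ℤ) by ring,
            show (1 : ℤ) + (1-((p:ℤ)-(q:ℤ))) = -(p:ℤ)+((q:ℤ)+1+1) by ring]
          ring
        · have hm' : (m : ℤ) = (q : ℤ) - p := by rw [hm_def]; omega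
          rw [hm',
            show (1 : ℤ) + ((p:ℤ)+(q:ℤ)+1+2) = (p:ℤ)+1+1+((q:ℤ)+1+1) by ring,
            show (1 : ℤ) + (1-((p:ℤ)+(q:ℤ)+1+1)) = -(p:ℤ)+-(q:ℤ) by ring,
            show (1 : ℤ) + ((q:ℤ)-(p:ℤ)+1) = -(p:ℤ)+((q:ℤ)+1+1) by ring,
            show (1 : ℤ) + (1-((q:ℤ)-(p:ℤ))) = (p:ℤ)+1+1+-(q:ℤ) by ring]
          ring
    _ = T 1 * (u * (u * S)) := by rw [hS2]
    _ = u * (u * (T 1 * S)) := by ring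
end

section
/- Let k ≥ 1 and let m_1 ≤ M_1, …, m_k ≤ M_k be integers. For s ∈ ℤ let a_s be the number of lattice points x = (x_1, …, x_k) ∈ ℤ^k with m_i ≤ x_i ≤ M_i for all i and Σ_{i=1}^{k} x_i = s. Then the sequence (a_s) for Σ_i m_i ≤ s ≤ Σ_i M_i is symmetric, i.e., a_s = a_{N-s} where N = Σ_{i=1}^{k} (m_i + M_i), and satisfies the trapezoidal property. Equivalently, the coefficients of the polynomial ∏_{i=1}^{k} (t^{m_i} + t^{m_i+1} + ⋯ + t^{M_i}) form a trapezoidal sequence. -/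
def NiceSeq (L : ℤ) (f : ℤ → ℕ) : Prop :=
  0 ≤ L ∧
  (∀ s, f s ≠ 0 → 0 ≤ s ∧ s ≤ L) ∧
  (∀ s, 0 ≤ s → s ≤ L → 0 < f s) ∧
  (∀ s, f s = f (L - s)) ∧
  (∀ s, 0 ≤ s → 2*s + 1 ≤ L → f s ≤ f (s+1)) ∧
  (∀ s, 0 ≤ s → 2*s + 2 ≤ L → f s = f (s+1) → ∀ t, s ≤ t → 2*t ≤ L → f t = f s)

namespace NiceSeq

variable {L : ℤ} {f : ℤ → ℕ}

lemma mono' (hf : NiceSeq L f) : ∀ a b : ℤ, a ≤ b → 2*b ≤ L → f a ≤ f b := by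
  obtain ⟨hL, hsupp, hpos, hsym, hmono, htrap⟩ := hf
  intro a b hab
  by_cases ha : f a = 0
  · intro _; simp [ha]
  obtain ⟨ha0, haL⟩ := hsupp a ha
  refine Int.le_induction (motive := fun b _ => 2*b ≤ L → f a ≤ f b) (fun _ => le_rfl) ?_ b hab
  intro b hb ih h2
  exact le_trans (ih (by omega)) (hmono b (by omega) (by omega))

lemma dist_mono (hf : NiceSeq L f) : ∀ a b : ℤ, |2*b - L| ≤ |2*a - L| → f a ≤ f b := by
  intro a b hab
  obtain ⟨hL, hsupp, hpos, hsym, hmono, htrap⟩ := hf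
  have ha : f a = f (min a (L - a)) := by
    rcases min_cases a (L - a) with ⟨h1, _⟩ | ⟨h1, _⟩
    · rw [h1]
    · rw [h1, ← hsym]
  have hb : f b = f (min b (L - b)) := by
    rcases min_cases b (L - b) with ⟨h1, _⟩ | ⟨h1, _⟩
    · rw [h1]
    · rw [h1, ← hsym]
  rw [ha, hb]
  rcases abs_cases (2*a - L) with ⟨h1, h2⟩ | ⟨h1, h2⟩ <;>
    rcases abs_cases (2*b - L) with ⟨h3, h4⟩ | ⟨h3, h4⟩ <;>
      exact mono' ⟨hL, hsupp, hpos, hsym, hmono, htrap⟩ _ _ (by omega) (by omega)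

end NiceSeq

lemma NiceSeq.conv (hf : NiceSeq L f) {Λ : ℤ} (hΛ : 0 ≤ Λ) :
    NiceSeq (L + Λ) (fun s => ∑ u ∈ Finset.Icc 0 Λ, f (s - u)) := by
  obtain ⟨hL, hsupp, hpos, hsym, hmono, htrap⟩ := hf
  have hf : NiceSeq L f := ⟨hL, hsupp, hpos, hsym, hmono, htrap⟩
  set h : ℤ → ℕ := fun s => ∑ u ∈ Finset.Icc 0 Λ, f (s - u) with hh
  have window : ∀ s : ℤ, h s = ∑ w ∈ Finset.Icc (s - Λ) s, f w := by
    intro s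
    refine Finset.sum_nbij' (i := fun u => s - u) (j := fun w => s - w) ?_ ?_ ?_ ?_ ?_
    · intro a ha; simp only [Finset.mem_Icc] at *; omega
    · intro a ha; simp only [Finset.mem_Icc] at *; omega
    · intro a _; omega
    · intro a _; omega
    · intro a _; rfl
  have hstep : ∀ s : ℤ, h (s+1) + f (s - Λ) = h s + f (s+1) := by
    intro s
    have e1 : Finset.Icc (s-Λ) (s+1) = insert (s+1) (Finset.Icc (s-Λ) s) := by
      ext x; simp only [Finset.mem_Icc, Finset.mem_insert]; omega
    have e2 : Finset.Icc (s-Λ) (s+1) = insert (s-Λ) (Finset.Icc (s+1-Λ) (s+1)) := by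
      ext x; simp only [Finset.mem_Icc, Finset.mem_insert]; omega
    have n1 : (s+1) ∉ Finset.Icc (s-Λ) s := by simp only [Finset.mem_Icc]; omega
    have n2 : (s-Λ) ∉ Finset.Icc (s+1-Λ) (s+1) := by simp only [Finset.mem_Icc]; omega
    have := (Finset.sum_insert n1 (f := f)).symm.trans
      ((congrArg (∑ w ∈ ·, f w) (e1.symm.trans e2)).trans (Finset.sum_insert n2 (f := f)))
    rw [window, window]
    omega
  refine ⟨by omega, ?_, ?_, ?_, ?_, ?_⟩
  · -- support
    intro s hs
    obtain ⟨u, hu, hfu⟩ := Finset.exists_ne_zero_of_sum_ne_zero hs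
    simp only [Finset.mem_Icc] at hu
    have := hsupp _ hfu
    omega
  · -- positivity
    intro s h0 h1
    have hu : max 0 (s - L) ∈ Finset.Icc 0 Λ := by simp only [Finset.mem_Icc]; omega
    calc 0 < f (s - max 0 (s - L)) := hpos _ (by omega) (by omega)
      _ ≤ h s := Finset.single_le_sum (f := fun u => f (s - u)) (fun i _ => Nat.zero_le _) hu
  · -- symmetry
    intro s
    show h s = h (L + Λ - s)
    refine Finset.sum_nbij' (i := fun u => Λ - u) (j := fun u => Λ - u) ?_ ?_ ?_ ?_ ?_
    · intro a ha; simp only [Finset.mem_Icc] at *; omega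
    · intro a ha; simp only [Finset.mem_Icc] at *; omega
    · intro a _; omega
    · intro a _; omega
    · intro a _
      have : s - a = L - (L + Λ - s - (Λ - a)) := by ring
      rw [this, ← hsym]
  · -- monotone
    intro s h0 h1
    have : f (s - Λ) ≤ f (s + 1) := by
      refine hf.dist_mono _ _ ?_
      rcases abs_cases (2*(s+1) - L) with ⟨e1, e2⟩ | ⟨e1, e2⟩ <;>
        rcases abs_cases (2*(s-Λ) - L) with ⟨e3, e4⟩ | ⟨e3, e4⟩ <;> omega
    have := hstep s
    omega
  · -- trapezoid
    intro s h0 h1 heq t hst ht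
    -- per-step flatness
    have key : ∀ t : ℤ, s ≤ t → 2*(t+1) ≤ L + Λ → h (t+1) = h t := by
      intro t hst h2
      have hfe : f (s + 1) = f (s - Λ) := by have := hstep s; omega
      have goal : f (t + 1) = f (t - Λ) → h (t+1) = h t := by
        intro e; have := hstep t; omega
      by_cases hBL : s + 1 ≤ L
      · -- main case
        refine goal ?_
        have hfB : 0 < f (s+1) := hpos _ (by omega) hBL
        have hA : f (s - Λ) ≠ 0 := by omega
        obtain ⟨hA0, hAL⟩ := hsupp _ hA
        set A' := min (s - Λ) (L - (s - Λ)) with hA'def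
        set B' := min (s + 1) (L - (s + 1)) with hB'def
        have hfA' : f A' = f (s - Λ) := by
          rcases min_cases (s - Λ) (L - (s - Λ)) with ⟨e, _⟩ | ⟨e, _⟩
          · rw [hA'def, e]
          · rw [hA'def, e, ← hsym]
        have hfB' : f B' = f (s + 1) := by
          rcases min_cases (s + 1) (L - (s + 1)) with ⟨e, _⟩ | ⟨e, _⟩
          · rw [hB'def, e]
          · rw [hB'def, e, ← hsym]
        have hAB : A' < B' := by omega
        have h2B' : 2 * B' ≤ L := by omega
        have hflat0 : f A' = f (A' + 1) := by
          have m1 : f A' ≤ f (A' + 1) := hmono A' (by omega) (by omega)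
          have m2 : f (A' + 1) ≤ f B' := hf.mono' _ _ (by omega) (by omega)
          have e : f A' = f B' := by rw [hfA', hfB', hfe]
          omega
        have flat := htrap A' (by omega) (by omega) hflat0
        have cflat : ∀ w, A' ≤ w → w ≤ L - A' → f w = f A' := by
          intro w hw1 hw2
          by_cases h2w : 2 * w ≤ L
          · exact flat w hw1 h2w
          · rw [hsym w]; exact flat (L - w) (by omega) (by omega)
        rw [cflat (t + 1) (by omega) (by omega), cflat (t - Λ) (by omega) (by omega)]
      · -- degenerate case: both out of support
        refine goal ?_
        have z1 : f (t+1) = 0 := by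
          by_contra hz; have := hsupp _ hz; omega
        have z2 : f (t-Λ) = 0 := by
          by_contra hz; have := hsupp _ hz; omega
        rw [z1, z2]
    have main : ∀ t : ℤ, s ≤ t → 2*t ≤ L + Λ → h t = h s := by
      intro t hst
      refine Int.le_induction (motive := fun t _ => 2*t ≤ L + Λ → h t = h s) (fun _ => rfl) ?_ t hst
      intro t ht' ih h2
      rw [key t ht' h2, ih (by omega)]
    exact main t hst ht


lemma count_succ (k : ℕ) (m M : Fin (k+1) → ℤ) (c : ℤ) :
    ((Finset.Icc m M).filter (fun x => ∑ i, x i = c)).card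
      = ∑ v ∈ Finset.Icc (m 0) (M 0),
          ((Finset.Icc (Fin.tail m) (Fin.tail M)).filter
            (fun y => ∑ i, y i = c - v)).card := by
  rw [Finset.card_eq_sum_card_fiberwise (f := fun x => x 0)
    (t := Finset.Icc (m 0) (M 0))
    (fun x hx => by
      simp only [Finset.mem_coe, Finset.mem_filter, Finset.mem_Icc] at hx
      exact Finset.mem_Icc.mpr ⟨hx.1.1 0, hx.1.2 0⟩)]
  refine Finset.sum_congr rfl (fun v hv => ?_)
  simp only [Finset.mem_Icc] at hv
  refine Finset.card_nbij' (i := Fin.tail) (j := fun y => Fin.cons (α := fun _ => ℤ) v y) ?_ ?_ ?_ ?_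
  · intro x hx
    simp only [Finset.mem_coe, Finset.mem_filter, Finset.mem_Icc] at *
    obtain ⟨⟨⟨hm, hM⟩, hsum⟩, hx0⟩ := hx
    refine ⟨⟨fun i => hm i.succ, fun i => hM i.succ⟩, ?_⟩
    rw [Fin.sum_univ_succ] at hsum
    simp only [Fin.tail]
    omega
  · intro y hy
    simp only [Finset.mem_coe, Finset.mem_filter, Finset.mem_Icc] at *
    obtain ⟨⟨hm, hM⟩, hsum⟩ := hy
    refine ⟨⟨⟨fun i => ?_, fun i => ?_⟩, ?_⟩, ?_⟩
    · rcases Fin.eq_zero_or_eq_succ i with rfl | ⟨j, rfl⟩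
      · simpa using hv.1
      · simpa [Fin.tail] using hm j
    · rcases Fin.eq_zero_or_eq_succ i with rfl | ⟨j, rfl⟩
      · simpa using hv.2
      · simpa [Fin.tail] using hM j
    · rw [Fin.sum_univ_succ]
      simp only [Fin.cons_zero, Fin.cons_succ]
      omega
    · simp
  · intro x hx
    simp only [Finset.mem_coe, Finset.mem_filter] at hx
    rw [← hx.2]
    exact Fin.cons_self_tail x
  · intro y _
    exact Fin.tail_cons (α := fun _ => ℤ) v y

lemma nice_count : ∀ (k : ℕ) (m M : Fin k → ℤ), (∀ i, m i ≤ M i) →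
    NiceSeq ((∑ i, M i) - (∑ i, m i))
      (fun s => ((Finset.Icc m M).filter
        (fun x => ∑ i, x i = (∑ i, m i) + s)).card) := by
  intro k
  induction k with
  | zero =>
      intro m M _
      have hm : ∀ x : Fin 0 → ℤ, x = m := fun x => funext fun i => i.elim0
      have hIcc : Finset.Icc m M = {m} := by
        ext x
        simp only [Finset.mem_Icc, Finset.mem_singleton]
        constructor
        · intro _; exact hm x
        · rintro rfl; exact ⟨le_refl _, by rw [hm M]⟩
      have hf : ∀ s : ℤ, ((Finset.Icc m M).filter
          (fun x => ∑ i, x i = (∑ i, m i) + s)).card = if s = 0 then 1 else 0 := by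
        intro s
        rw [hIcc, Finset.filter_singleton]
        have h0 : (∑ i, m i) = 0 := by simp
        rcases eq_or_ne s 0 with rfl | hs
        · rw [if_pos (by omega), if_pos rfl, Finset.card_singleton]
        · rw [if_neg (by omega), if_neg hs, Finset.card_empty]
      have hL : (∑ i : Fin 0, M i) - (∑ i : Fin 0, m i) = 0 := by simp
      rw [hL]
      refine ⟨le_refl 0, ?_, ?_, ?_, ?_, ?_⟩
      · intro s hs; dsimp only at hs; rw [hf] at hs
        rcases eq_or_ne s 0 with rfl | h; · omega
        · rw [if_neg h] at hs; omega
      · intro s h1 h2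
        have : s = 0 := by omega
        dsimp only; rw [hf, if_pos this]; omega
      · intro s; dsimp only; rw [hf, hf]
        rcases eq_or_ne s 0 with rfl | h
        · rw [if_pos rfl, if_pos (by omega)]
        · rw [if_neg h, if_neg (by omega)]
      · intro s h1 h2; omega
      · intro s h1 h2 _ t h3 h4
        have : s = 0 := by omega
        have ht0 : t = 0 := by omega
        rw [this, ht0]
  | succ k ih =>
      intro m M hmM
      set tm := Fin.tail m with htm
      set tM := Fin.tail M with htM
      set Λ : ℤ := M 0 - m 0 with hΛdef
      have hΛ : 0 ≤ Λ := by have := hmM 0; omega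
      have IH := (ih tm tM (fun i : Fin k => hmM i.succ)).conv hΛ
      have key : ∀ s : ℤ, ((Finset.Icc m M).filter
            (fun x => ∑ i, x i = (∑ i, m i) + s)).card
          = ∑ u ∈ Finset.Icc (0:ℤ) Λ, ((Finset.Icc tm tM).filter
              (fun y => ∑ i, y i = (∑ i, tm i) + (s - u))).card := by
        intro s
        rw [count_succ k m M ((∑ i, m i) + s)]
        have hmap : Finset.Icc (m 0) (M 0)
            = (Finset.Icc (0:ℤ) Λ).map (addLeftEmbedding (m 0)) := by
          rw [Finset.map_add_left_Icc]
          congr 1 <;> omega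
        rw [hmap, Finset.sum_map]
        refine Finset.sum_congr rfl (fun u hu => ?_)
        have e : (∑ i, m i) = m 0 + ∑ i, tm i := by
          rw [Fin.sum_univ_succ]; rfl
        have harg : ∀ y : Fin k → ℤ, ((∑ i, y i) = (∑ i, m i) + s - (addLeftEmbedding (m 0)) u)
            ↔ ((∑ i, y i) = (∑ i, tm i) + (s - u)) := by
          intro y
          have : (addLeftEmbedding (m 0)) u = m 0 + u := rfl
          rw [this]
          omega
        rw [Finset.filter_congr (fun y _ => by rw [harg y])]
      have hL : (∑ i, M i) - (∑ i, m i) = ((∑ i, tM i) - (∑ i, tm i)) + Λ := by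
        rw [Fin.sum_univ_succ M, Fin.sum_univ_succ m]
        have e1 : (∑ i, tM i) = ∑ i : Fin k, M i.succ := rfl
        have e2 : (∑ i, tm i) = ∑ i : Fin k, m i.succ := rfl
        omega
      rw [hL]
      have hfun : (fun s => ((Finset.Icc m M).filter
            (fun x => ∑ i, x i = (∑ i, m i) + s)).card)
          = (fun s => ∑ u ∈ Finset.Icc (0:ℤ) Λ, ((Finset.Icc tm tM).filter
              (fun y => ∑ i, y i = (∑ i, tm i) + (s - u))).card) := funext key
      rw [hfun]
      exact IH



/-- A finite sequence `a 1, …, a n` of non-negative integers satisfies the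
trapezoidal property if it is symmetric (`a i = a (n+1-i)`), non-decreasing
up to the middle, non-increasing after the middle, and if `a i = a (i+1)`
for some `i` in the first half then the sequence is constant from `i`
up to `m = ⌊n/2⌋`. -/
def Trapezoidal (n : ℕ) (a : ℕ → ℕ) : Prop :=
  (∀ i, 1 ≤ i → i ≤ n → a i = a (n + 1 - i)) ∧
  (∀ i, 1 ≤ i → 2 * i < n → a i ≤ a (i + 1)) ∧
  (∀ i, n < 2 * i → i < n → a (i + 1) ≤ a i) ∧
  (∀ i, 1 ≤ i → 2 * i ≤ n → a i = a (i + 1) → ∀ j, i ≤ j → 2 * j ≤ n → a j = a i)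

/-- Let `a s` be the number of lattice points of the box
`∏_{i=1}^{k} [m i, M i] ⊆ ℤ^k` whose coordinate sum is `s`.  Then `a` is
symmetric about `N/2` where `N = ∑ i, (m i + M i)`, and (after reindexing the
support `[∑ m i, ∑ M i]` by `j = 1, …, ∑ M i - ∑ m i + 1`) the sequence `a`
satisfies the trapezoidal property.  Equivalently, the coefficients of
`∏_{i=1}^{k} (t^{m i} + ⋯ + t^{M i})` form a trapezoidal sequence. -/
theorem box_counting_sequence_trapezoidal
    (k : ℕ) (hk : 1 ≤ k) (m M : Fin k → ℤ) (hmM : ∀ i, m i ≤ M i) :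
    (∀ s : ℤ,
      ((Finset.Icc m M).filter (fun x => ∑ i, x i = s)).card =
      ((Finset.Icc m M).filter (fun x => ∑ i, x i = (∑ i, (m i + M i)) - s)).card) ∧
    Trapezoidal (((∑ i, M i) - (∑ i, m i)).toNat + 1)
      (fun j =>
        ((Finset.Icc m M).filter (fun x => ∑ i, x i = (∑ i, m i) + (j : ℤ) - 1)).card) := by
  obtain ⟨hL0, hsupp, hpos, hsym, hmono, htrap⟩ := nice_count k m M hmM
  set L : ℤ := (∑ i, M i) - (∑ i, m i) with hLdef
  set f : ℤ → ℕ := fun s => ((Finset.Icc m M).filter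
    (fun x => ∑ i, x i = (∑ i, m i) + s)).card with hfdef
  have hA : ∀ s : ℤ, ((Finset.Icc m M).filter (fun x => ∑ i, x i = s)).card
      = f (s - ∑ i, m i) := by
    intro s
    show _ = ((Finset.Icc m M).filter
      (fun x => ∑ i, x i = (∑ i, m i) + (s - ∑ i, m i))).card
    congr 1
    exact Finset.filter_congr (fun x _ => by constructor <;> intro <;> omega)
  have ha : ∀ j : ℕ, ((Finset.Icc m M).filter
      (fun x => ∑ i, x i = (∑ i, m i) + (j:ℤ) - 1)).card = f ((j:ℤ) - 1) := by
    intro j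
    have h := hA ((∑ i, m i) + (j:ℤ) - 1)
    rw [show (∑ i, m i) + (j:ℤ) - 1 - (∑ i, m i) = (j:ℤ) - 1 from by ring] at h
    exact h
  have hN : (∑ i, (m i + M i)) = (∑ i, m i) + (∑ i, M i) := Finset.sum_add_distrib
  constructor
  · intro s
    rw [hA s, hA ((∑ i, (m i + M i)) - s), hsym (s - ∑ i, m i)]
    congr 1
    omega
  · set n : ℕ := L.toNat + 1 with hndef
    have hn : (L.toNat : ℤ) = L := Int.toNat_of_nonneg hL0
    refine ⟨?_, ?_, ?_, ?_⟩
    · intro i h1 h2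
      dsimp only
      rw [ha i, ha (n + 1 - i), hsym ((i:ℤ) - 1)]
      congr 1
      omega
    · intro i h1 h2
      dsimp only
      rw [ha i, ha (i + 1)]
      have e : ((i+1 : ℕ):ℤ) - 1 = ((i:ℤ) - 1) + 1 := by push_cast; ring
      rw [e]
      exact hmono _ (by omega) (by omega)
    · intro i h1 h2
      dsimp only
      rw [ha i, ha (i + 1), hsym (((i+1 : ℕ):ℤ) - 1), hsym ((i:ℤ) - 1)]
      have e : L - ((i:ℤ) - 1) = (L - (((i+1 : ℕ):ℤ) - 1)) + 1 := by push_cast; ring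
      rw [e]
      exact hmono _ (by push_cast; omega) (by push_cast; omega)
    · intro i h1 h2 heq j hij hj
      dsimp only at heq ⊢
      rw [ha j, ha i]
      rw [ha i, ha (i + 1)] at heq
      rcases eq_or_lt_of_le h2 with he | hlt
      · have : j = i := by omega
        rw [this]
      · have e : ((i+1 : ℕ):ℤ) - 1 = ((i:ℤ) - 1) + 1 := by push_cast; ring
        rw [e] at heq
        exact htrap ((i:ℤ) - 1) (by omega) (by omega) heq ((j:ℤ) - 1)
          (by omega) (by omega)
end

section
/- Let k ≥ 1 and let X ⊆ ℤ^k be a finite nonempty set satisfying: (i) connectivity by unit steps: for any x, y ∈ X there exists a sequence x = z_0, …, z_l = y in X with consecutive points differing in exactly one coordinate by exactly 1; and (ii) closure under completing unit squares: for every x ∈ X, all distinct indices i ≠ j and all signs ε, δ ∈ {−1, +1}, if x + ε·e_i ∈ X and x + δ·e_j ∈ X then x + ε·e_i + δ·e_j ∈ X (where e_i is the i-th standard basis vector). Then X is a box: there exist integers m_i ≤ M_i (i = 1, …, k) with X = {x ∈ ℤ^k : m_i ≤ x_i ≤ M_i for all i}. -/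
/-- Two lattice points of `ℤ^k` are neighboring (related by a unit step) if
they differ in exactly one coordinate, and in that coordinate they differ by
exactly `1`. -/
def UnitStep {k : ℕ} (x y : Fin k → ℤ) : Prop :=
  ∃ i : Fin k, (x i - y i = 1 ∨ y i - x i = 1) ∧ ∀ j : Fin k, j ≠ i → x j = y j

namespace BoxAux

variable {k : ℕ}

/-- `z` lies in the box spanned by `x` and `y`. -/
def InBox (x y z : Fin k → ℤ) : Prop :=
  ∀ i, min (x i) (y i) ≤ z i ∧ z i ≤ max (x i) (y i)

/-- A unit step inside `X` that avoids direction `i`. -/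
def Step (X : Finset (Fin k → ℤ)) (i : Fin k) (u v : Fin k → ℤ) : Prop :=
  u ∈ X ∧ v ∈ X ∧ ∃ j, j ≠ i ∧ ∃ δ : ℤ, (δ = 1 ∨ δ = -1) ∧ v = u + Pi.single j δ

lemma single_apply (j : Fin k) (δ : ℤ) (u : Fin k → ℤ) (l : Fin k) :
    (u + Pi.single j δ : Fin k → ℤ) l = if l = j then u l + δ else u l := by
  by_cases h : l = j
  · subst h; simp
  · simp [h, Pi.single_eq_of_ne h]

/-- Shift propagation: if `p + ε e_i ∈ X` and there is a path from `p` to `q`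
inside `X` avoiding direction `i`, then `q + ε e_i ∈ X`. -/
lemma shift (X : Finset (Fin k → ℤ))
    (hsquare : ∀ x ∈ X, ∀ i j : Fin k, i ≠ j → ∀ ε δ : ℤ,
      (ε = 1 ∨ ε = -1) → (δ = 1 ∨ δ = -1) →
      x + Pi.single i ε ∈ X → x + Pi.single j δ ∈ X →
      x + Pi.single i ε + Pi.single j δ ∈ X)
    (i : Fin k) (ε : ℤ) (hε : ε = 1 ∨ ε = -1)
    {p q : Fin k → ℤ} (h : Relation.ReflTransGen (Step X i) p q)
    (hp : p + Pi.single i ε ∈ X) : q + Pi.single i ε ∈ X := by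
  induction h with
  | refl => exact hp
  | tail _ hstep ih =>
    obtain ⟨hb, hc, j, hji, δ, hδ, rfl⟩ := hstep
    have := hsquare _ hb i j (Ne.symm hji) ε δ hε hδ ih hc
    rwa [add_right_comm] at this

/-- Monotone path inside a box avoiding direction `i`. -/
lemma pathC (X : Finset (Fin k → ℤ)) (i : Fin k) :
    ∀ n : ℕ, ∀ p q : Fin k → ℤ, p ∈ X → q ∈ X →
      (∀ z, InBox p q z → z ∈ X) → p i = q i →
      (∑ j, (q j - p j).natAbs) = n →
      Relation.ReflTransGen (Step X i) p q := by
  intro n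
  induction n with
  | zero =>
    intro p q _ _ _ _ hsum
    have hpq : p = q := by
      funext j
      have h0 : (q j - p j).natAbs = 0 :=
        (Finset.sum_eq_zero_iff.mp hsum) j (Finset.mem_univ j)
      omega
    exact hpq ▸ Relation.ReflTransGen.refl
  | succ n ih =>
    intro p q hp hq hbox hpi hsum
    have hne : ∃ j, p j ≠ q j := by
      by_contra hcon
      push_neg at hcon
      have : ∑ j, (q j - p j).natAbs = 0 :=
        Finset.sum_eq_zero (fun j _ => by have := hcon j; omega)
      omega
    obtain ⟨j, hj⟩ := hne
    have hji : j ≠ i := fun h => hj (by rw [h]; exact hpi)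
    set δ : ℤ := if p j < q j then 1 else -1 with hδdef
    have hδcase : (p j < q j ∧ δ = 1) ∨ (q j < p j ∧ δ = -1) := by
      rcases lt_or_gt_of_ne hj with h | h
      · left; exact ⟨h, if_pos h⟩
      · right; exact ⟨h, if_neg (by omega)⟩
    set p' : Fin k → ℤ := p + Pi.single j δ with hp'def
    have hp'app : ∀ l, p' l = if l = j then p l + δ else p l := single_apply j δ p
    have hp'box : InBox p q p' := by
      intro l
      have h1 := hp'app l
      by_cases hl : l = j
      · subst hl; simp only [if_pos rfl] at h1; omega
      · simp only [if_neg hl] at h1; omega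
    have hp'X : p' ∈ X := hbox p' hp'box
    have hcontain : ∀ z, InBox p' q z → InBox p q z := by
      intro z hz l
      have h1 := hz l
      have h2 := hp'app l
      by_cases hl : l = j
      · subst hl; simp only [if_pos rfl] at h2; omega
      · simp only [if_neg hl] at h2; omega
    have hp'i : p' i = q i := by
      have := hp'app i
      rw [if_neg (fun h => hji h.symm)] at this
      rw [this]; exact hpi
    have hsum' : (∑ l, (q l - p' l).natAbs) = n := by
      have key : ∀ f : Fin k → ℕ, (∑ l, f l) = (∑ l ∈ Finset.univ.erase j, f l) + f j := by
        intro f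
        rw [Finset.sum_erase_add _ _ (Finset.mem_univ j)]
      have e1 := key (fun l => (q l - p' l).natAbs)
      have e2 := key (fun l => (q l - p l).natAbs)
      have heq : (∑ l ∈ Finset.univ.erase j, (q l - p' l).natAbs)
          = (∑ l ∈ Finset.univ.erase j, (q l - p l).natAbs) := by
        apply Finset.sum_congr rfl
        intro l hl
        have hlj : l ≠ j := (Finset.mem_erase.mp hl).1
        rw [hp'app l, if_neg hlj]
      have hterm : (q j - p' j).natAbs + 1 = (q j - p j).natAbs := by
        have := hp'app j
        rw [if_pos rfl] at this
        omega
      omega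
    have hstep : Step X i p p' :=
      ⟨hp, hp'X, j, hji, δ, hδcase.elim (fun h => Or.inl h.2) (fun h => Or.inr h.2), hp'def⟩
    exact Relation.ReflTransGen.head hstep
      (ih p' q hp'X hq (fun z hz => hbox z (hcontain z hz)) hp'i hsum')

/-- Main lemma: the box spanned by two connected points of `X` lies in `X`. -/
lemma box_subset (X : Finset (Fin k → ℤ))
    (hsquare : ∀ x ∈ X, ∀ i j : Fin k, i ≠ j → ∀ ε δ : ℤ,
      (ε = 1 ∨ ε = -1) → (δ = 1 ∨ δ = -1) →
      x + Pi.single i ε ∈ X → x + Pi.single j δ ∈ X →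
      x + Pi.single i ε + Pi.single j δ ∈ X)
    {x y : Fin k → ℤ}
    (h : Relation.ReflTransGen (fun u v => u ∈ X ∧ v ∈ X ∧ UnitStep u v) x y)
    (hx : x ∈ X) : ∀ z, InBox x y z → z ∈ X := by
  induction h with
  | refl =>
    intro z hz
    have : z = x := funext fun i => by have := hz i; omega
    exact this ▸ hx
  | @tail b c _ hstep ih =>
    obtain ⟨hb, hc, i, hi1, hi2⟩ := hstep
    intro z hz
    have hε : c i - b i = 1 ∨ c i - b i = -1 := by omega
    have hceq : c = b + Pi.single i (c i - b i) := by
      funext l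
      rw [single_apply]
      by_cases hl : l = i
      · subst hl; simp
      · simp only [if_neg hl]; exact (hi2 l hl).symm
    by_cases hcase : min (x i) (b i) ≤ z i ∧ z i ≤ max (x i) (b i)
    · apply ih
      intro l
      by_cases hl : l = i
      · subst hl; exact hcase
      · have := hz l; rw [← hi2 l hl] at this; exact this
    · -- z i = c i, and we shift a point of box(x,b)
      have hzi : z i = c i := by have := hz i; omega
      set z' : Fin k → ℤ := Function.update z i (b i) with hz'def
      have hz'app : ∀ l, z' l = if l = i then b i else z l := by
        intro l
        by_cases hl : l = i
        · subst hl; simp [hz'def]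
        · simp [hz'def, Function.update_apply, if_neg hl]
      have hz'box : InBox x b z' := by
        intro l
        rw [hz'app l]
        by_cases hl : l = i
        · subst hl; rw [if_pos rfl]; omega
        · rw [if_neg hl]
          have := hz l; rw [← hi2 l hl] at this; omega
      have hz'X : z' ∈ X := ih z' hz'box
      have hcontain : ∀ w, InBox b z' w → InBox x b w := by
        intro w hw l
        have h1 := hw l
        have h2 := hz'box l
        omega
      have hpath : Relation.ReflTransGen (Step X i) b z' :=
        pathC X i _ b z' hb hz'X (fun w hw => ih w (hcontain w hw))
          (by rw [hz'app i, if_pos rfl]) rfl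
      have hc' : b + Pi.single i (c i - b i) ∈ X := hceq ▸ hc
      have hfin : z' + Pi.single i (c i - b i) ∈ X :=
        shift X hsquare i (c i - b i) hε hpath hc'
      have : z = z' + Pi.single i (c i - b i) := by
        funext l
        rw [single_apply]
        by_cases hl : l = i
        · subst hl; rw [if_pos rfl, hz'app l, if_pos rfl]; omega
        · rw [if_neg hl, hz'app l, if_neg hl]
      exact this ▸ hfin

end BoxAux

/-- Let `X ⊆ ℤ^k` be a finite nonempty set that is (i) connected by unit steps
inside `X`, and (ii) closed under completing unit squares: if `x ∈ X`,
`x + ε • e i ∈ X` and `x + δ • e j ∈ X` for distinct coordinates `i ≠ j` and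
signs `ε, δ ∈ {1, -1}`, then `x + ε • e i + δ • e j ∈ X`.  Then `X` is a box:
`X = {x : m i ≤ x i ≤ M i for all i}` for some integers `m i ≤ M i`. -/
theorem connected_square_closed_set_is_box
    (k : ℕ) (hk : 1 ≤ k) (X : Finset (Fin k → ℤ)) (hne : X.Nonempty)
    (hconn : ∀ x ∈ X, ∀ y ∈ X,
      Relation.ReflTransGen (fun u v => u ∈ X ∧ v ∈ X ∧ UnitStep u v) x y)
    (hsquare : ∀ x ∈ X, ∀ i j : Fin k, i ≠ j → ∀ ε δ : ℤ,
      (ε = 1 ∨ ε = -1) → (δ = 1 ∨ δ = -1) →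
      x + Pi.single i ε ∈ X → x + Pi.single j δ ∈ X →
      x + Pi.single i ε + Pi.single j δ ∈ X) :
    ∃ m M : Fin k → ℤ, (∀ i, m i ≤ M i) ∧
      ∀ x : Fin k → ℤ, x ∈ X ↔ ∀ i, m i ≤ x i ∧ x i ≤ M i := by
  classical
  obtain ⟨x0, hx0⟩ := hne
  have hne' : X.Nonempty := ⟨x0, hx0⟩
  set u : Fin k → ℤ := X.inf' hne' id with hudef
  set v : Fin k → ℤ := X.sup' hne' id with hvdef
  have hinf_closed : ∀ a ∈ (X : Set (Fin k → ℤ)), ∀ b ∈ (X : Set (Fin k → ℤ)),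
      a ⊓ b ∈ (X : Set (Fin k → ℤ)) := by
    intro a ha b hb
    have : BoxAux.InBox a b (a ⊓ b) := by
      intro i
      simp only [Pi.inf_apply]
      omega
    exact BoxAux.box_subset X hsquare (hconn a ha b hb) ha _ this
  have hsup_closed : ∀ a ∈ (X : Set (Fin k → ℤ)), ∀ b ∈ (X : Set (Fin k → ℤ)),
      a ⊔ b ∈ (X : Set (Fin k → ℤ)) := by
    intro a ha b hb
    have : BoxAux.InBox a b (a ⊔ b) := by
      intro i
      simp only [Pi.sup_apply]
      omega
    exact BoxAux.box_subset X hsquare (hconn a ha b hb) ha _ this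
  have hu : u ∈ X := Finset.inf'_mem (X : Set (Fin k → ℤ)) hinf_closed X hne' id (fun a ha => ha)
  have hv : v ∈ X := Finset.sup'_mem (X : Set (Fin k → ℤ)) hsup_closed X hne' id (fun a ha => ha)
  have hule : ∀ x ∈ X, u ≤ x := fun x hx => Finset.inf'_le id hx
  have hlev : ∀ x ∈ X, x ≤ v := fun x hx => Finset.le_sup' id hx
  refine ⟨u, v, fun i => le_trans (hule x0 hx0 i) (hlev x0 hx0 i), fun x => ⟨fun hx i =>
    ⟨hule x hx i, hlev x hx i⟩, fun hx => ?_⟩⟩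
  have huv := hconn u hu v hv
  apply BoxAux.box_subset X hsquare huv hu
  intro i
  have h1 := (hx i).1
  have h2 := (hx i).2
  have h3 : u i ≤ v i := le_trans (hule x0 hx0 i) (hlev x0 hx0 i)
  omega
end
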